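/- Let k be a perfect field and let f, g ∈ k[x] be monic irreducible polynomials with f(0) ≠ 0 ≠ g(0). Let E be a splitting field of f·g over k, let B ⊆ E and C ⊆ E be the splitting fields of f and g inside E, let Λ ⊆ B and M ⊆ C be the sets of zeros of f and g, and assume B ∩ C = k. Fix zeros λ ∈ Λ of f and μ ∈ M of g, and set l = (deg f · deg g)/deg m_k(λμ), where m_k(λμ) is the minimal polynomial of λμ over k. Then: (i) ∏_{(α,β) ∈ Λ×M} (x − αβ) = m_k(λμ)^l; (ii) l divides deg f and l divides deg g; (iii) k contains l distinct l-th roots of unity; in particular, l is not a multiple of the characteristic of k. -/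

import Mathlib

set_option maxHeartbeats 1000000
theorem aux_dvd {E : Type*} [Field E] [DecidableEq E] (G : Finset E) (h1 : (1:E) ∈ G)
    (hmul : ∀ s ∈ G, ∀ t ∈ G, s*t ∈ G) (h0 : (0:E) ∉ G) :
    ∀ T : Finset E, (0:E) ∉ T → (∀ s ∈ G, ∀ x ∈ T, s*x ∈ T) → G.card ∣ T.card := by
  have hinv : ∀ s ∈ G, s⁻¹ ∈ G := by
    intro s hs
    have hs0 : s ≠ 0 := fun h => h0 (h ▸ hs)
    have himg : G.image (s * ·) = G := by
      apply Finset.eq_of_subset_of_card_le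
      · intro x hx
        obtain ⟨t, ht, rfl⟩ := Finset.mem_image.1 hx
        exact hmul s hs t ht
      · rw [Finset.card_image_of_injective _ (mul_right_injective₀ hs0)]
    have : (1:E) ∈ G.image (s * ·) := by rw [himg]; exact h1
    obtain ⟨t, ht, hst⟩ := Finset.mem_image.1 this
    have : t = s⁻¹ := by field_simp at hst ⊢; linear_combination hst
    exact this ▸ ht
  intro T
  induction T using Finset.strongInduction with
  | _ T ih =>
    intro hT0 hact
    rcases T.eq_empty_or_nonempty with rfl | ⟨x, hx⟩
    · simp
    · have hx0 : x ≠ 0 := fun h => hT0 (h ▸ hx)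
      set O : Finset E := G.image (· * x) with hO
      have hOsub : O ⊆ T := by
        intro y hy
        obtain ⟨s, hs, rfl⟩ := Finset.mem_image.1 hy
        exact hact s hs x hx
      have hOcard : O.card = G.card :=
        Finset.card_image_of_injective _ (mul_left_injective₀ hx0)
      have hss : T \ O ⊂ T := by
        apply Finset.sdiff_ssubset hOsub
        exact ⟨x, Finset.mem_image.2 ⟨1, h1, one_mul x⟩⟩
      have hdvd : G.card ∣ (T \ O).card := by
        apply ih _ hss
        · exact fun h => hT0 (Finset.mem_sdiff.1 h).1
        · intro s hs y hy
          rw [Finset.mem_sdiff] at hy ⊢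
          refine ⟨hact s hs y hy.1, fun hmem => hy.2 ?_⟩
          obtain ⟨t, ht, hst⟩ := Finset.mem_image.1 hmem
          have hs0 : s ≠ 0 := fun h => h0 (h ▸ hs)
          refine Finset.mem_image.2 ⟨s⁻¹ * t, hmul _ (hinv s hs) _ ht, ?_⟩
          field_simp at hst ⊢
          linear_combination hst
      rw [← Finset.card_sdiff_add_card_eq_card hOsub, hOcard]
      exact hdvd.add (dvd_refl _)


theorem aux_prodmap {α : Type*} [Mul α] (F : α → α) (hF : ∀ x y, F (x*y) = F x * F y) :
    ∀ (s t : Multiset α), ((s ×ˢ t).map fun q : α × α => q.1*q.2).map F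
      = (((s.map F) ×ˢ (t.map F)).map fun q : α × α => q.1*q.2) := by
  intro s t
  induction s using Multiset.induction_on with
  | empty => simp
  | cons a s ih =>
    simp only [Multiset.cons_product, Multiset.map_add, Multiset.map_map, Multiset.map_cons, ih]
    congr 1
    simp [Function.comp_def, hF]

open Polynomial

theorem minpoly_over_B {k E : Type*} [Field k] [Field E] [Algebra k E]
    (g : k[X]) (hgm : g.Monic) (hg : Irreducible g)
    (hsg : (g.map (algebraMap k E)).Splits)
    (B C : IntermediateField k E)
    (hroots : ∀ x ∈ g.aroots E, x ∈ C)
    (hBC : B ⊓ C = ⊥)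
    (β : E) (hβ : β ∈ g.aroots E) :
    (minpoly (↥B) β).map (algebraMap (↥B) E) = g.map (algebraMap k E) := by
  classical
  have hg0 : g ≠ 0 := hg.ne_zero
  have hgmap0 : g.map (algebraMap k E) ≠ 0 := (Polynomial.map_ne_zero_iff (algebraMap k E).injective).mpr hg0
  have hβg : aeval β g = 0 := by
    rw [mem_roots hgmap0] at hβ
    rwa [aeval_def, ← eval_map]
  have hβ0 : aeval β (g.map (algebraMap k ↥B)) = 0 := by
    rwa [aeval_map_algebraMap]
  have hint : IsIntegral (↥B) β := ⟨g.map (algebraMap k ↥B), hgm.map _, by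
    rwa [← aeval_def]⟩
  have hdvd : minpoly (↥B) β ∣ g.map (algebraMap k ↥B) := minpoly.dvd _ _ hβ0
  set h' : E[X] := (minpoly (↥B) β).map (algebraMap (↥B) E) with hh'
  have hcomp : (g.map (algebraMap k ↥B)).map (algebraMap (↥B) E) = g.map (algebraMap k E) := by
    rw [map_map, ← IsScalarTower.algebraMap_eq]
  have h'dvd : h' ∣ g.map (algebraMap k E) := by
    rw [← hcomp]; exact Polynomial.map_dvd _ hdvd
  have h'monic : h'.Monic := (minpoly.monic hint).map _
  have h'splits : h'.Splits :=
    hsg.of_dvd hgmap0 h'dvd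
  have h'prod : h' = (h'.roots.map fun a => X - Polynomial.C a).prod :=
    h'splits.eq_prod_roots_of_monic h'monic
  have h'rootsC : ∀ r ∈ h'.roots, r ∈ C := fun r hr =>
    hroots r (Multiset.mem_of_le (Polynomial.roots.le_of_dvd hgmap0 h'dvd) hr)
  -- coefficients of h' lie in C
  have hliftC : h' ∈ Polynomial.lifts (algebraMap (↥C) E) := by
    rw [h'prod]
    refine Subsemiring.multiset_prod_mem _ _ fun q hq => ?_
    obtain ⟨r, hr, rfl⟩ := Multiset.mem_map.1 hq
    rw [sub_eq_add_neg, ← Polynomial.C_neg]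
    refine Subsemiring.add_mem _ ⟨X, Polynomial.map_X _⟩ ⟨Polynomial.C ⟨-r, neg_mem (h'rootsC r hr)⟩, by simp⟩
  have hcoeffk : ∀ n, h'.coeff n ∈ Set.range (algebraMap k E) := by
    intro n
    have hC : h'.coeff n ∈ C := by
      obtain ⟨q, hq⟩ := hliftC
      rw [← hq, Polynomial.coe_mapRingHom, Polynomial.coeff_map]
      exact (q.coeff n).2
    have hBmem : h'.coeff n ∈ B := by
      rw [hh', Polynomial.coeff_map]
      exact ((minpoly (↥B) β).coeff n).2
    have : h'.coeff n ∈ B ⊓ C := ⟨hBmem, hC⟩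
    rwa [hBC, IntermediateField.mem_bot] at this
  have hlift : h' ∈ Polynomial.lifts (algebraMap k E) := by
    rw [Polynomial.lifts_iff_coeff_lifts]; exact hcoeffk
  obtain ⟨p, hpmap, hpdeg, hpmonic⟩ :=
    Polynomial.lifts_and_degree_eq_and_monic hlift h'monic
  have hβh' : h'.IsRoot β := by
    rw [hh', Polynomial.IsRoot, Polynomial.eval_map, ← aeval_def, minpoly.aeval]
  have haevalp : aeval β p = 0 := by
    rw [aeval_def, ← eval_map, hpmap]; exact hβh'
  have hming : minpoly k β = g := (minpoly.eq_of_irreducible_of_monic hg hβg hgm).symm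
  have hgdvdp : g ∣ p := hming ▸ minpoly.dvd k β haevalp
  have : g.map (algebraMap k E) ∣ h' := hpmap ▸ Polynomial.map_dvd _ hgdvdp
  exact Polynomial.eq_of_monic_of_associated h'monic (hgm.map _)
    (associated_of_dvd_dvd h'dvd this)

theorem stmt14 {k E : Type*} [Field k] [PerfectField k] [Field E] [Algebra k E]
    (f g : k[X]) (hfm : f.Monic) (hgm : g.Monic) (hf : Irreducible f) (hg : Irreducible g)
    (hf0 : f.eval 0 ≠ 0) (hg0 : g.eval 0 ≠ 0)
    [Polynomial.IsSplittingField k E (f * g)]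
    (B C : IntermediateField k E)
    (hB : B = IntermediateField.adjoin k (f.rootSet E))
    (hC : C = IntermediateField.adjoin k (g.rootSet E))
    (hBC : B ⊓ C = ⊥)
    (lam mu : E) (hlam : lam ∈ f.rootSet E) (hmu : mu ∈ g.rootSet E)
    (l : ℕ) (hl : l = f.natDegree * g.natDegree / (minpoly k (lam * mu)).natDegree) :
    ((f.aroots E ×ˢ g.aroots E).map fun q : E × E => X - Polynomial.C (q.1 * q.2)).prod =
        ((minpoly k (lam * mu)).map (algebraMap k E)) ^ l ∧
      l ∣ f.natDegree ∧ l ∣ g.natDegree ∧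
      (∃ S : Finset k, S.card = l ∧ ∀ a ∈ S, a ^ l = 1) ∧
      ∀ q : ℕ, q.Prime → CharP k q → ¬ q ∣ l := by
  classical
  have hfg0 : f * g ≠ 0 := mul_ne_zero hf.ne_zero hg.ne_zero
  have hsplitfg : ((f * g).map (algebraMap k E)).Splits := IsSplittingField.splits E (f*g)
  have hsf : (f.map (algebraMap k E)).Splits :=
    hsplitfg.of_dvd (Polynomial.map_ne_zero hfg0) (Polynomial.map_dvd _ ⟨g, rfl⟩)
  have hsg : (g.map (algebraMap k E)).Splits :=
    hsplitfg.of_dvd (Polynomial.map_ne_zero hfg0) (Polynomial.map_dvd _ ⟨f, mul_comm f g⟩)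
  haveI : FiniteDimensional k E := IsSplittingField.finiteDimensional E (f*g)
  haveI : Normal k E := Normal.of_isSplittingField (f*g)
  haveI : Algebra.IsSeparable k E := inferInstance
  have hfsep : f.Separable := PerfectField.separable_of_irreducible hf
  have hgsep : g.Separable := PerfectField.separable_of_irreducible hg
  have hΛnd : (f.aroots E).Nodup := nodup_roots (hfsep.map)
  have hMnd : (g.aroots E).Nodup := nodup_roots (hgsep.map)
  have hΛcard : Multiset.card (f.aroots E) = f.natDegree := by
    rw [aroots_def, ← natDegree_map (algebraMap k E)]
    exact (splits_iff_card_roots.mp hsf).symm ▸ rfl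
  -- basic root facts
  have hfmap0 : f.map (algebraMap k E) ≠ 0 := (Polynomial.map_ne_zero_iff (algebraMap k E).injective).mpr hf.ne_zero
  have hgmap0 : g.map (algebraMap k E) ≠ 0 := (Polynomial.map_ne_zero_iff (algebraMap k E).injective).mpr hg.ne_zero
  have haevalf : ∀ x, x ∈ f.aroots E ↔ aeval x f = 0 := by
    intro x
    rw [mem_roots hfmap0, IsRoot, eval_map, ← aeval_def]
  have haevalg : ∀ x, x ∈ g.aroots E ↔ aeval x g = 0 := by
    intro x
    rw [mem_roots hgmap0, IsRoot, eval_map, ← aeval_def]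
  have hrootsetf : ∀ x, x ∈ f.aroots E ↔ x ∈ f.rootSet E := by
    intro x; rw [mem_rootSet', haevalf]; exact ⟨fun h => ⟨hfmap0, h⟩, fun h => h.2⟩
  have hrootsetg : ∀ x, x ∈ g.aroots E ↔ x ∈ g.rootSet E := by
    intro x; rw [mem_rootSet', haevalg]; exact ⟨fun h => ⟨hgmap0, h⟩, fun h => h.2⟩
  have hlam' : lam ∈ f.aroots E := (hrootsetf lam).mpr hlam
  have hmu' : mu ∈ g.aroots E := (hrootsetg mu).mpr hmu
  -- algEquivs map roots to roots
  have hmapf : ∀ (σ : E ≃ₐ[k] E), ∀ x ∈ f.aroots E, σ x ∈ f.aroots E := by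
    intro σ x hx
    rw [haevalf] at hx ⊢
    have h2 : aeval (σ.toAlgHom x) f = σ.toAlgHom (aeval x f) := aeval_algHom_apply σ.toAlgHom x f
    simpa [hx] using h2
  have hmapg : ∀ (σ : E ≃ₐ[k] E), ∀ x ∈ g.aroots E, σ x ∈ g.aroots E := by
    intro σ x hx
    rw [haevalg] at hx ⊢
    have h2 : aeval (σ.toAlgHom x) g = σ.toAlgHom (aeval x g) := aeval_algHom_apply σ.toAlgHom x g
    simpa [hx] using h2
  -- minpoly of any root of f is f
  have hminf : ∀ x ∈ f.aroots E, minpoly k x = f := by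
    intro x hx
    exact (minpoly.eq_of_irreducible_of_monic hf ((haevalf x).mp hx) hfm).symm
  have hming : ∀ x ∈ g.aroots E, minpoly k x = g := by
    intro x hx
    exact (minpoly.eq_of_irreducible_of_monic hg ((haevalg x).mp hx) hgm).symm
  -- transitivity on roots of f
  have htransf : ∀ x ∈ f.aroots E, ∀ y ∈ f.aroots E, ∃ σ : E ≃ₐ[k] E, σ x = y := by
    intro x hx y hy
    refine minpoly.exists_algEquiv_of_root (Algebra.IsIntegral.isIntegral y).isAlgebraic ?_
    rw [hminf y hy]; exact (haevalf x).mp hx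
  have htransg : ∀ x ∈ g.aroots E, ∀ y ∈ g.aroots E, ∃ σ : E ≃ₐ[k] E, σ x = y := by
    intro x hx y hy
    refine minpoly.exists_algEquiv_of_root (Algebra.IsIntegral.isIntegral y).isAlgebraic ?_
    rw [hming y hy]; exact (haevalg x).mp hx
  -- pair transitivity
  haveI : Normal (↥B) E := Normal.tower_top_of_normal k (↥B) E
  have hconj : ∀ x ∈ f.aroots E, ∀ y ∈ g.aroots E, ∃ σ : E ≃ₐ[k] E, σ lam = x ∧ σ mu = y := by
    intro x hx y hy
    obtain ⟨σ₁, hσ₁⟩ := htransf lam hlam' x hx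
    have hσμ : σ₁ mu ∈ g.aroots E := hmapg σ₁ mu hmu'
    have hmB : (minpoly (↥B) y).map (algebraMap (↥B) E) = g.map (algebraMap k E) :=
      minpoly_over_B g hgm hg hsg B C (fun z hz => hC ▸ IntermediateField.subset_adjoin k _ ((hrootsetg z).mp hz)) hBC y hy
    have hev : aeval (σ₁ mu) (minpoly (↥B) y) = 0 := by
      have : ((minpoly (↥B) y).map (algebraMap (↥B) E)).eval (σ₁ mu) = 0 := by
        rw [hmB, eval_map, ← aeval_def, ← haevalg]; exact hσμ
      rwa [eval_map, ← aeval_def] at this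
    obtain ⟨τ, hτ⟩ := minpoly.exists_algEquiv_of_root
      (Algebra.IsIntegral.isIntegral (R := ↥B) y).isAlgebraic hev
    refine ⟨σ₁.trans (τ.restrictScalars k), ?_, ?_⟩
    · have hxB : x ∈ B := hB ▸ IntermediateField.subset_adjoin k _ ((hrootsetf x).mp hx)
      show τ (σ₁ lam) = x
      rw [hσ₁]
      have := τ.commutes ⟨x, hxB⟩
      simpa using this
    · exact hτ
  -- Step C : multiset identity
  have hintlm : IsIntegral k (lam*mu) := Algebra.IsIntegral.isIntegral _
  have hm0 : minpoly k (lam*mu) ≠ 0 := minpoly.ne_zero hintlm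
  have hmmap0 : (minpoly k (lam*mu)).map (algebraMap k E) ≠ 0 :=
    (Polynomial.map_ne_zero_iff (algebraMap k E).injective).mpr hm0
  have hmsplits : ((minpoly k (lam*mu)).map (algebraMap k E)).Splits :=
    (inferInstance : Normal k E).splits (lam*mu)
  have hmsep : (minpoly k (lam*mu)).Separable :=
    PerfectField.separable_of_irreducible (minpoly.irreducible hintlm)
  have hmnd : ((minpoly k (lam*mu)).aroots E).Nodup := nodup_roots hmsep.map
  have hmcard : Multiset.card ((minpoly k (lam*mu)).aroots E) = (minpoly k (lam*mu)).natDegree := by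
    rw [aroots_def, ← natDegree_map (algebraMap k E)]
    exact (splits_iff_card_roots.mp hmsplits).symm ▸ rfl
  have haevalm : ∀ x, x ∈ (minpoly k (lam*mu)).aroots E ↔ aeval x (minpoly k (lam*mu)) = 0 := by
    intro x
    rw [mem_roots hmmap0, IsRoot, eval_map, ← aeval_def]
  set M0 : Multiset E := ((f.aroots E) ×ˢ (g.aroots E)).map (fun q : E × E => q.1*q.2) with hM0
  have hM0roots : ∀ x ∈ M0, x ∈ (minpoly k (lam*mu)).aroots E := by
    intro x hx
    obtain ⟨q, hq, rfl⟩ := Multiset.mem_map.1 hx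
    obtain ⟨hq1, hq2⟩ := Multiset.mem_product.1 hq
    obtain ⟨σ, hσ1, hσ2⟩ := hconj q.1 hq1 q.2 hq2
    rw [haevalm]
    have h2 : aeval (σ.toAlgHom (lam*mu)) (minpoly k (lam*mu))
        = σ.toAlgHom (aeval (lam*mu) (minpoly k (lam*mu))) := aeval_algHom_apply _ _ _
    simp only [minpoly.aeval, map_zero] at h2
    have h3 : σ (lam*mu) = q.1 * q.2 := by rw [map_mul, hσ1, hσ2]
    rw [← h3]
    simpa using h2
  have harootsfinv : ∀ (σ : E ≃ₐ[k] E), (f.aroots E).map σ = f.aroots E := by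
    intro σ
    refine Multiset.eq_of_le_of_card_le ?_ (by simp)
    refine (Multiset.le_iff_subset (hΛnd.map σ.injective)).mpr ?_
    intro x hx
    obtain ⟨y, hy, rfl⟩ := Multiset.mem_map.1 hx
    exact hmapf σ y hy
  have harootsginv : ∀ (σ : E ≃ₐ[k] E), (g.aroots E).map σ = g.aroots E := by
    intro σ
    refine Multiset.eq_of_le_of_card_le ?_ (by simp)
    refine (Multiset.le_iff_subset (hMnd.map σ.injective)).mpr ?_
    intro x hx
    obtain ⟨y, hy, rfl⟩ := Multiset.mem_map.1 hx
    exact hmapg σ y hy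
  have hM0inv : ∀ (σ : E ≃ₐ[k] E), M0.map σ = M0 := by
    intro σ
    rw [hM0, aux_prodmap σ (map_mul σ), harootsfinv σ, harootsginv σ]
  have hcount : ∀ x ∈ (minpoly k (lam*mu)).aroots E, M0.count x = M0.count (lam*mu) := by
    intro x hx
    obtain ⟨σ, hσ⟩ := minpoly.exists_algEquiv_of_root hintlm.isAlgebraic ((haevalm x).mp hx)
    calc M0.count x = (M0.map σ).count (σ x) := (Multiset.count_map_eq_count' σ M0 σ.injective x).symm
    _ = M0.count (lam*mu) := by rw [hM0inv σ, hσ]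
  set c := M0.count (lam*mu) with hc
  have hM0eq : M0 = c • ((minpoly k (lam*mu)).aroots E) := by
    refine Multiset.ext.2 fun x => ?_
    rw [Multiset.count_nsmul]
    by_cases hx : x ∈ (minpoly k (lam*mu)).aroots E
    · rw [Multiset.count_eq_one_of_mem hmnd hx, mul_one]
      exact hcount x hx
    · rw [Multiset.count_eq_zero.2 hx, mul_zero, Multiset.count_eq_zero]
      exact fun hmem => hx (hM0roots x hmem)
  have hMcard : Multiset.card (g.aroots E) = g.natDegree := by
    rw [aroots_def, ← natDegree_map (algebraMap k E)]
    exact (splits_iff_card_roots.mp hsg).symm ▸ rfl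
  have hcardeq : f.natDegree * g.natDegree = c * (minpoly k (lam*mu)).natDegree := by
    have := congrArg Multiset.card hM0eq
    simpa [hM0, hΛcard, hMcard, hmcard] using this
  have hmdegpos : 0 < (minpoly k (lam*mu)).natDegree := minpoly.natDegree_pos hintlm
  have hlc : l = c := by
    rw [hl, hcardeq, Nat.mul_div_cancel c hmdegpos]
  -- part (i)
  have hpart1 : ((f.aroots E ×ˢ g.aroots E).map fun q : E × E => X - Polynomial.C (q.1 * q.2)).prod =
      ((minpoly k (lam * mu)).map (algebraMap k E)) ^ l := by
    have h1 : ((f.aroots E ×ˢ g.aroots E).map fun q : E × E => X - Polynomial.C (q.1 * q.2))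
        = M0.map (fun x => X - Polynomial.C x) := by
      rw [hM0, Multiset.map_map]; rfl
    rw [h1, hM0eq, hlc, Multiset.map_nsmul]
    have h2 : (minpoly k (lam*mu)).map (algebraMap k E)
        = (((minpoly k (lam*mu)).aroots E).map fun a => X - Polynomial.C a).prod :=
      hmsplits.eq_prod_roots_of_monic ((minpoly.monic hintlm).map _)
    rw [h2]
    generalize (((minpoly k (lam*mu)).aroots E).map fun a => X - Polynomial.C a) = s
    induction c with
    | zero => simp
    | succ n ih => rw [succ_nsmul, Multiset.prod_add, ih, pow_succ]
  -- Step D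
  have hΛ0 : ∀ x ∈ f.aroots E, x ≠ 0 := by
    intro x hx h0
    rw [haevalf] at hx
    subst h0
    rw [aeval_def, eval₂_at_zero] at hx
    have h4 : f.coeff 0 = 0 := (algebraMap k E).injective (by simpa using hx)
    rw [coeff_zero_eq_eval_zero] at h4
    exact hf0 h4
  have hM0' : ∀ x ∈ g.aroots E, x ≠ 0 := by
    intro x hx h0
    rw [haevalg] at hx
    subst h0
    rw [aeval_def, eval₂_at_zero] at hx
    have h4 : g.coeff 0 = 0 := (algebraMap k E).injective (by simpa using hx)
    rw [coeff_zero_eq_eval_zero] at h4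
    exact hg0 h4
  have hlam0 : lam ≠ 0 := hΛ0 lam hlam'
  have hmu0 : mu ≠ 0 := hM0' mu hmu'
  set ΛF : Finset E := (f.aroots E).toFinset with hΛF
  set MF : Finset E := (g.aroots E).toFinset with hMF
  have hΛFmem : ∀ x, x ∈ ΛF ↔ x ∈ f.aroots E := fun x => Multiset.mem_toFinset
  have hMFmem : ∀ x, x ∈ MF ↔ x ∈ g.aroots E := fun x => Multiset.mem_toFinset
  set SE : Finset E := (ΛF.filter (fun α => α⁻¹ * (lam*mu) ∈ MF)).image (· * lam⁻¹) with hSE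
  have hSEmem : ∀ s, s ∈ SE ↔ s * lam ∈ ΛF ∧ s⁻¹ * mu ∈ MF := by
    intro s
    constructor
    · intro hs
      obtain ⟨α, hα, rfl⟩ := Finset.mem_image.1 hs
      rw [Finset.mem_filter] at hα
      have hα0 : α ≠ 0 := hΛ0 α ((hΛFmem α).mp hα.1)
      constructor
      · show α * lam⁻¹ * lam ∈ ΛF
        rw [inv_mul_cancel_right₀ hlam0]; exact hα.1
      · show (α * lam⁻¹)⁻¹ * mu ∈ MF
        have heq : (α * lam⁻¹)⁻¹ * mu = α⁻¹ * (lam * mu) := by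
          rw [mul_inv, inv_inv, mul_assoc]
        rw [heq]; exact hα.2
    · rintro ⟨h1, h2⟩
      have hs0 : s ≠ 0 := by
        intro h; rw [h, zero_mul] at h1
        exact hΛ0 0 ((hΛFmem 0).mp h1) rfl
      refine Finset.mem_image.2 ⟨s * lam, Finset.mem_filter.2 ⟨h1, ?_⟩,
        mul_inv_cancel_right₀ hlam0 s⟩
      have heq : (s * lam)⁻¹ * (lam * mu) = s⁻¹ * mu := by
        rw [mul_inv, mul_assoc, inv_mul_cancel_left₀ hlam0]
      rw [heq]; exact h2
  -- two stability facts
  have hstabΛ : ∀ s : E, (∃ a : k, algebraMap k E a = s) → s * lam ∈ f.aroots E →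
      ∀ α ∈ f.aroots E, s * α ∈ f.aroots E := by
    rintro s ⟨a, rfl⟩ hsl α hα
    obtain ⟨σ, hσ⟩ := htransf lam hlam' α hα
    have := hmapf σ _ hsl
    rwa [map_mul, AlgEquiv.commutes, hσ] at this
  have hstabM : ∀ s : E, (∃ a : k, algebraMap k E a = s) → s * mu ∈ g.aroots E →
      ∀ β ∈ g.aroots E, s * β ∈ g.aroots E := by
    rintro s ⟨a, rfl⟩ hsm β hβ
    obtain ⟨σ, hσ⟩ := htransg mu hmu' β hβ
    have := hmapg σ _ hsm
    rwa [map_mul, AlgEquiv.commutes, hσ] at this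
  -- members of SE are in k
  have hSEk : ∀ s ∈ SE, ∃ a : k, algebraMap k E a = s := by
    intro s hs
    obtain ⟨h1, h2⟩ := (hSEmem s).mp hs
    have hs0 : s ≠ 0 := by
      intro h; rw [h, zero_mul] at h1
      exact hΛ0 0 ((hΛFmem 0).mp h1) rfl
    have hsB : s ∈ B := by
      have hlamB : lam ∈ B := hB ▸ IntermediateField.subset_adjoin k _ hlam
      have hslB : s * lam ∈ B := hB ▸ IntermediateField.subset_adjoin k _
        ((hrootsetf _).mp ((hΛFmem _).mp h1))
      have : s = (s * lam) * lam⁻¹ := by field_simp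
      rw [this]
      exact mul_mem hslB (inv_mem hlamB)
    have hsC : s ∈ C := by
      have hmuC : mu ∈ C := hC ▸ IntermediateField.subset_adjoin k _ hmu
      have hsmC : s⁻¹ * mu ∈ C := hC ▸ IntermediateField.subset_adjoin k _
        ((hrootsetg _).mp ((hMFmem _).mp h2))
      have : s = ((s⁻¹ * mu) * mu⁻¹)⁻¹ := by field_simp
      rw [this]
      exact inv_mem (mul_mem hsmC (inv_mem hmuC))
    have : s ∈ B ⊓ C := ⟨hsB, hsC⟩
    rwa [hBC, IntermediateField.mem_bot] at this
  have hSE1 : (1:E) ∈ SE := by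
    rw [hSEmem]
    constructor
    · rw [one_mul]; exact (hΛFmem lam).mpr hlam'
    · rw [inv_one, one_mul]; exact (hMFmem mu).mpr hmu'
  have hSE0 : (0:E) ∉ SE := by
    intro h
    obtain ⟨h1, _⟩ := (hSEmem 0).mp h
    rw [zero_mul] at h1
    exact hΛ0 0 ((hΛFmem 0).mp h1) rfl
  have hSEmul : ∀ s ∈ SE, ∀ t ∈ SE, s * t ∈ SE := by
    intro s hs t ht
    obtain ⟨hs1, hs2⟩ := (hSEmem s).mp hs
    obtain ⟨ht1, ht2⟩ := (hSEmem t).mp ht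
    obtain ⟨a, ha⟩ := hSEk s hs
    have hs0 : s ≠ 0 := by
      intro h; rw [h, zero_mul] at hs1
      exact hΛ0 0 ((hΛFmem 0).mp hs1) rfl
    have ha0 : a ≠ 0 := by rintro rfl; simp at ha; exact hs0 ha.symm
    rw [hSEmem]
    constructor
    · have := hstabΛ s ⟨a, ha⟩ ((hΛFmem _).mp hs1) (t * lam) ((hΛFmem _).mp ht1)
      rw [← mul_assoc] at this
      exact (hΛFmem _).mpr this
    · have hsinv : ∃ b : k, algebraMap k E b = s⁻¹ := ⟨a⁻¹, by rw [map_inv₀, ha]⟩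
      have := hstabM s⁻¹ hsinv ((hMFmem _).mp hs2) (t⁻¹ * mu) ((hMFmem _).mp ht2)
      rw [← mul_assoc, ← mul_inv] at this
      exact (hMFmem _).mpr this
  -- card SE = l
  have hccard : c = Multiset.card (((f.aroots E) ×ˢ (g.aroots E)).filter
      (fun q : E × E => lam*mu = q.1*q.2)) := by
    rw [hc, hM0, Multiset.count_map]
  set F1 : Multiset (E × E) := ((f.aroots E) ×ˢ (g.aroots E)).filter
      (fun q : E × E => lam*mu = q.1*q.2) with hF1
  have hF1nd : F1.Nodup := (hΛnd.product hMnd).filter _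
  have hfst : ∀ q ∈ F1, ∀ q' ∈ F1, q.1 = q'.1 → q = q' := by
    intro q hq q' hq' h
    rw [hF1, Multiset.mem_filter] at hq hq'
    have hq0 : q.1 ≠ 0 := hΛ0 _ (Multiset.mem_product.1 hq.1).1
    refine Prod.ext h (mul_left_cancel₀ hq0 ?_)
    rw [← hq.2, h, ← hq'.2]
  have hmapnd : (F1.map Prod.fst).Nodup := Multiset.Nodup.map_on hfst hF1nd
  have hcard2 : Multiset.card F1 = (ΛF.filter (fun α => α⁻¹*(lam*mu) ∈ MF)).card := by
    rw [← Multiset.card_map Prod.fst, ← Multiset.toFinset_card_of_nodup hmapnd]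
    congr 1
    apply Finset.ext; intro α
    simp only [Multiset.mem_toFinset, Multiset.mem_map, Finset.mem_filter, hΛFmem, hMFmem]
    constructor
    · rintro ⟨q, hq, rfl⟩
      rw [hF1, Multiset.mem_filter] at hq
      obtain ⟨hqm, hqe⟩ := hq
      obtain ⟨h1, h2⟩ := Multiset.mem_product.1 hqm
      refine ⟨h1, ?_⟩
      have hq10 : q.1 ≠ 0 := hΛ0 _ h1
      have heq : q.1⁻¹ * (lam*mu) = q.2 := by rw [hqe, inv_mul_cancel_left₀ hq10]
      rw [heq]; exact h2
    · rintro ⟨h1, h2⟩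
      refine ⟨(α, α⁻¹*(lam*mu)), ?_, rfl⟩
      rw [hF1, Multiset.mem_filter]
      have hα0 : α ≠ 0 := hΛ0 _ h1
      exact ⟨Multiset.mem_product.2 ⟨h1, h2⟩, by rw [mul_inv_cancel_left₀ hα0]⟩
  have hSEcard : SE.card = l := by
    rw [hSE, Finset.card_image_of_injective _ (mul_left_injective₀ (inv_ne_zero hlam0)),
      ← hcard2, ← hccard, hlc]
  have hlpos : 0 < l := by
    rw [← hSEcard]; exact Finset.card_pos.2 ⟨1, hSE1⟩
  -- powers of elements of SE stay in SE; l-th power is 1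
  have hpowmem : ∀ s ∈ SE, ∀ n : ℕ, s ^ n ∈ SE := by
    intro s hs n
    induction n with
    | zero => simpa using hSE1
    | succ n ih => rw [pow_succ]; exact hSEmul _ ih _ hs
  have hpow : ∀ s ∈ SE, s ^ l = 1 := by
    intro s hs
    have hs0 : s ≠ 0 := fun h => hSE0 (h ▸ hs)
    have himg : SE.image (s * ·) = SE := by
      apply Finset.eq_of_subset_of_card_le
      · intro x hx
        obtain ⟨t, ht, rfl⟩ := Finset.mem_image.1 hx
        exact hSEmul s hs t ht
      · rw [Finset.card_image_of_injective _ (mul_right_injective₀ hs0)]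
    have hprod0 : SE.prod id ≠ 0 :=
      Finset.prod_ne_zero_iff.2 (fun x hx h0 => hSE0 (h0 ▸ hx))
    have hkey : SE.prod id = s ^ SE.card * SE.prod id := by
      calc SE.prod id = (SE.image (s * ·)).prod id := by rw [himg]
        _ = SE.prod (fun x => s * x) :=
            Finset.prod_image (fun x _ y _ h => mul_left_cancel₀ hs0 h)
        _ = s ^ SE.card * SE.prod id := by
            rw [Finset.prod_mul_distrib, Finset.prod_const]; rfl
    have := mul_right_cancel₀ hprod0 (hkey.symm.trans (one_mul _).symm)
    rwa [hSEcard] at this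
  have hSEinv : ∀ s ∈ SE, s⁻¹ ∈ SE := by
    intro s hs
    have hs0 : s ≠ 0 := fun h => hSE0 (h ▸ hs)
    have h1 : s * s ^ (l-1) = 1 := by
      have hsucc : l - 1 + 1 = l := by omega
      rw [← pow_succ', hsucc]
      exact hpow s hs
    rw [inv_eq_of_mul_eq_one_right h1]
    exact hpowmem s hs (l-1)
  -- divisibility
  have hactΛ : ∀ s ∈ SE, ∀ x ∈ ΛF, s*x ∈ ΛF := by
    intro s hs x hx
    obtain ⟨h1, _⟩ := (hSEmem s).mp hs
    exact (hΛFmem _).mpr (hstabΛ s (hSEk s hs) ((hΛFmem _).mp h1) x ((hΛFmem _).mp hx))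
  have hactM : ∀ s ∈ SE, ∀ x ∈ MF, s*x ∈ MF := by
    intro s hs x hx
    have hsinv := hSEinv s hs
    obtain ⟨_, h2⟩ := (hSEmem s⁻¹).mp hsinv
    rw [inv_inv] at h2
    exact (hMFmem _).mpr (hstabM s (hSEk s hs) ((hMFmem _).mp h2) x ((hMFmem _).mp hx))
  have hΛF0 : (0:E) ∉ ΛF := fun h => hΛ0 0 ((hΛFmem 0).mp h) rfl
  have hMF0 : (0:E) ∉ MF := fun h => hM0' 0 ((hMFmem 0).mp h) rfl
  have hdvdf : l ∣ f.natDegree := by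
    have h := aux_dvd SE hSE1 hSEmul hSE0 ΛF hΛF0 hactΛ
    rwa [hSEcard, hΛF, Multiset.toFinset_card_of_nodup hΛnd, hΛcard] at h
  have hdvdg : l ∣ g.natDegree := by
    have h := aux_dvd SE hSE1 hSEmul hSE0 MF hMF0 hactM
    rwa [hSEcard, hMF, Multiset.toFinset_card_of_nodup hMnd, hMcard] at h
  -- the finset of roots of unity in k
  set S : Finset k := SE.preimage (algebraMap k E)
    ((algebraMap k E).injective.injOn) with hS
  have himgS : S.image (algebraMap k E) = SE := by
    rw [hS, Finset.image_preimage]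
    apply Finset.filter_true_of_mem
    intro x hx
    obtain ⟨a, ha⟩ := hSEk x hx
    exact ⟨a, ha⟩
  have hScard : S.card = l := by
    rw [← hSEcard, ← himgS, Finset.card_image_of_injective _ (algebraMap k E).injective]
  have hSpow : ∀ a ∈ S, a ^ l = 1 := by
    intro a ha
    have : algebraMap k E a ∈ SE := Finset.mem_preimage.1 ha
    have h2 := hpow _ this
    apply (algebraMap k E).injective
    rw [map_pow, map_one, h2]
  -- characteristic
  have hchar : ∀ q : ℕ, q.Prime → CharP k q → ¬ q ∣ l := by
    intro q hq hcq hql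
    haveI := Fact.mk hq
    set d := l / q with hd
    have hdl : d * q = l := Nat.div_mul_cancel hql
    have hdpos : 0 < d := Nat.div_pos (Nat.le_of_dvd hlpos hql) hq.pos
    have hdlt : d < l := by
      rw [hd]; exact Nat.div_lt_self hlpos hq.one_lt
    have hSd : ∀ a ∈ S, a ^ d = 1 := by
      intro a ha
      have h1 : (a ^ d) ^ q = 1 := by rw [← pow_mul, hdl]; exact hSpow a ha
      have h2 : frobenius k q (a ^ d) = frobenius k q 1 := by
        rw [frobenius_def, map_one, h1]
      exact frobenius_inj k q h2
    have hsub : S.val ≤ (X^d - Polynomial.C (1:k)).roots := by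
      have hp0 : (X^d - Polynomial.C (1:k)) ≠ 0 := X_pow_sub_C_ne_zero hdpos 1
      refine (Multiset.le_iff_subset S.nodup).2 ?_
      intro a ha
      rw [mem_roots hp0]
      simp only [IsRoot, eval_sub, eval_pow, eval_X, eval_C]
      rw [hSd a ha, sub_self]
    have hle : l ≤ d := by
      have h1 := Multiset.card_le_card hsub
      have h2 := Polynomial.card_roots' (X^d - Polynomial.C (1:k))
      have h3 : (X^d - Polynomial.C (1:k)).natDegree = d := natDegree_X_pow_sub_C
      calc l = S.card := hScard.symm
        _ ≤ Multiset.card (X^d - Polynomial.C (1:k)).roots := by rw [Finset.card_def]; exact h1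
        _ ≤ _ := h2
        _ = d := h3
    omega
  exact ⟨hpart1, hdvdf, hdvdg, ⟨S, hScard, hSpow⟩, hchar⟩
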